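/- Every projector (self-adjoint idempotent matrix) over the θ-deformed 2n-plane algebra C_alg(ℝ^{2n}_Θ) has all its entries in ℂ·1, i.e. P(C_alg(ℝ^{2n}_Θ)) = P(ℂ). -/

import Mathlib

open Complex

noncomputable def stmt7.eps (t : ℝ) : ℂ := Complex.exp (t * Complex.I)

namespace stmt7

lemma eps_mul (a b : ℝ) : eps a * eps b = eps (a + b) := by
  rw [eps, eps, eps, ← Complex.exp_add]
  push_cast; ring_nf

lemma eps_zero : eps 0 = 1 := by simp [eps]

lemma eps_ne_zero (t : ℝ) : eps t ≠ 0 := Complex.exp_ne_zero _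

lemma eps_conj (t : ℝ) : (starRingEnd ℂ) (eps t) = eps (-t) := by
  rw [eps, eps, ← Complex.exp_conj]
  simp [Complex.conj_I]

variable {A : Type*} [Ring A] [Algebra ℂ A]

lemma eps_inv {a b : A} {t : ℝ} (h : a = eps t • b) : b = eps (-t) • a := by
  rw [h, smul_smul, eps_mul]
  simp [eps_zero]

lemma comm_pow {a b : A} {t : ℝ} (h : a * b = eps t • (b * a)) (k : ℕ) :
    a * b ^ k = eps (k * t) • (b ^ k * a) := by
  induction k with
  | zero => simp [eps_zero]
  | succ k ih =>
    rw [pow_succ, ← mul_assoc a, ih, smul_mul_assoc, mul_assoc (b ^ k), h,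
      mul_smul_comm, smul_smul, eps_mul, mul_assoc (b ^ k)]
    congr 2
    push_cast; ring

lemma comm_list (a : A) : ∀ l : List A,
    (∀ x ∈ l, ∃ t : ℝ, a * x = eps t • (x * a)) →
    ∃ t : ℝ, a * l.prod = eps t • (l.prod * a) := by
  intro l
  induction l with
  | nil => intro _; exact ⟨0, by simp [eps_zero]⟩
  | cons x l ih =>
    intro h
    obtain ⟨t1, ht1⟩ := h x (List.mem_cons_self)
    obtain ⟨t2, ht2⟩ := ih fun y hy => h y (List.mem_cons_of_mem _ hy)
    refine ⟨t1 + t2, ?_⟩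
    rw [List.prod_cons, ← mul_assoc, ht1, smul_mul_assoc, mul_assoc, ht2,
      mul_smul_comm, smul_smul, eps_mul, ← mul_assoc]

lemma comm_list' (a : A) (l : List A)
    (h : ∀ x ∈ l, ∃ t : ℝ, x * a = eps t • (a * x)) :
    ∃ t : ℝ, l.prod * a = eps t • (a * l.prod) := by
  obtain ⟨t, ht⟩ := comm_list a l (fun x hx => by
    obtain ⟨t, ht⟩ := h x hx
    exact ⟨-t, eps_inv ht⟩)
  exact ⟨-t, eps_inv ht⟩

variable {A : Type*} [Ring A] [Algebra ℂ A]

lemma ins_left :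
    ∀ (m : ℕ) (f : Fin m → A) (T : Fin m → Fin m → ℝ),
      (∀ a b, f a * f b = eps (T a b) • (f b * f a)) →
      ∀ (p : Fin m → ℕ) (i : Fin m),
      ∃ t : ℝ, f i * (List.ofFn fun j => f j ^ p j).prod
        = eps t • (List.ofFn fun j => f j ^ (Function.update p i (p i + 1)) j).prod := by
  intro m
  induction m with
  | zero => exact fun f T h p i => i.elim0
  | succ m ih =>
    intro f T hc p i
    cases i using Fin.cases with
    | zero =>
      refine ⟨0, ?_⟩
      rw [eps_zero, one_smul, List.ofFn_succ, List.ofFn_succ, List.prod_cons,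
        List.prod_cons, ← mul_assoc, ← pow_succ']
      have h1 : ∀ j : Fin m, Function.update p 0 (p 0 + 1) j.succ = p j.succ :=
        fun j => Function.update_of_ne (Fin.succ_ne_zero j) _ _
      simp only [h1, Function.update_self]
    | succ i' =>
      have h1 := comm_pow (hc i'.succ 0) (p 0)
      obtain ⟨t2, ht2⟩ := ih (fun j => f j.succ) (fun a b => T a.succ b.succ)
        (fun a b => hc a.succ b.succ) (fun j => p j.succ) i'
      refine ⟨(p 0 : ℝ) * T i'.succ 0 + t2, ?_⟩
      rw [List.ofFn_succ, List.ofFn_succ, List.prod_cons, List.prod_cons,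
        ← mul_assoc, h1, smul_mul_assoc, mul_assoc, ht2, mul_smul_comm,
        smul_smul, eps_mul]
      have h2 : Function.update p i'.succ (p i'.succ + 1) 0 = p 0 :=
        Function.update_of_ne (Ne.symm (Fin.succ_ne_zero i')) _ _
      have h3 : ∀ j : Fin m, Function.update (fun j : Fin m => p j.succ) i'
          (p i'.succ + 1) j = Function.update p i'.succ (p i'.succ + 1) j.succ := by
        intro j
        rcases eq_or_ne j i' with rfl | hne
        · simp
        · rw [Function.update_of_ne hne, Function.update_of_ne
            (fun h => hne (Fin.succ_injective _ h))]
      simp only [h2, h3]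
    
lemma ins_right :
    ∀ (m : ℕ) (f : Fin m → A) (T : Fin m → Fin m → ℝ),
      (∀ a b, f a * f b = eps (T a b) • (f b * f a)) →
      ∀ (p : Fin m → ℕ) (i : Fin m),
      ∃ t : ℝ, (List.ofFn fun j => f j ^ p j).prod * f i
        = eps t • (List.ofFn fun j => f j ^ (Function.update p i (p i + 1)) j).prod := by
  intro m
  induction m with
  | zero => exact fun f T h p i => i.elim0
  | succ m ih =>
    intro f T hc p i
    cases i using Fin.cases with
    | zero =>
      obtain ⟨t1, ht1⟩ := comm_list' (f 0)
        (List.ofFn fun j : Fin m => f j.succ ^ p j.succ)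
        (by
          intro x hx
          obtain ⟨j, rfl⟩ := List.mem_ofFn.mp hx
          exact ⟨-((p j.succ : ℝ) * T 0 j.succ), eps_inv (comm_pow (hc 0 j.succ) _)⟩)
      refine ⟨t1, ?_⟩
      rw [List.ofFn_succ, List.ofFn_succ, List.prod_cons, List.prod_cons,
        mul_assoc, ht1, mul_smul_comm, ← mul_assoc, ← pow_succ]
      have h1 : ∀ j : Fin m, Function.update p 0 (p 0 + 1) j.succ = p j.succ :=
        fun j => Function.update_of_ne (Fin.succ_ne_zero j) _ _
      simp only [h1, Function.update_self]
    | succ i' =>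
      obtain ⟨t2, ht2⟩ := ih (fun j => f j.succ) (fun a b => T a.succ b.succ)
        (fun a b => hc a.succ b.succ) (fun j => p j.succ) i'
      refine ⟨t2, ?_⟩
      rw [List.ofFn_succ, List.ofFn_succ, List.prod_cons, List.prod_cons,
        mul_assoc, ht2, mul_smul_comm]
      have h2 : Function.update p i'.succ (p i'.succ + 1) 0 = p 0 :=
        Function.update_of_ne (Ne.symm (Fin.succ_ne_zero i')) _ _
      have h3 : ∀ j : Fin m, Function.update (fun j : Fin m => p j.succ) i'
          (p i'.succ + 1) j = Function.update p i'.succ (p i'.succ + 1) j.succ := by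
        intro j
        rcases eq_or_ne j i' with rfl | hne
        · simp
        · rw [Function.update_of_ne hne, Function.update_of_ne
            (fun h => hne (Fin.succ_injective _ h))]
      simp only [h2, h3]

end stmt7
set_option linter.unusedSectionVars false
namespace stmt7

lemma upd_peel {n : ℕ} {p : Fin n → ℕ} {i : Fin n} (h : p i ≠ 0) :
    Function.update (Function.update p i (p i - 1)) i
      (Function.update p i (p i - 1) i + 1) = p := by
  funext j
  rcases eq_or_ne j i with rfl | hj
  · simp only [Function.update_self]
    omega
  · rw [Function.update_of_ne hj, Function.update_of_ne hj]

variable {A : Type*} [Ring A] [StarRing A] [Algebra ℂ A] [StarModule ℂ A] {n : ℕ}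
  (θ : Fin n → Fin n → ℝ) (z zbar : Fin n → A)

/-- ordered monomial -/
def Mm (p q : Fin n → ℕ) : A :=
  (List.ofFn fun i => z i ^ p i).prod * (List.ofFn fun i => zbar i ^ q i).prod

variable (hθ : ∀ p q, θ p q = - θ q p)
  (hzz : ∀ p q, z p * z q = eps (θ p q) • (z q * z p))
  (hbb : ∀ p q, zbar p * zbar q = eps (θ p q) • (zbar q * zbar p))
  (hbz : ∀ p q, zbar p * z q = eps (θ q p) • (z q * zbar p))

section
include hzz

lemma Lz (p q : Fin n → ℕ) (i : Fin n) :
    ∃ t : ℝ, z i * Mm z zbar p q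
      = eps t • Mm z zbar (Function.update p i (p i + 1)) q := by
  obtain ⟨t, ht⟩ := ins_left n z θ hzz p i
  exact ⟨t, by rw [Mm, ← mul_assoc, ht, smul_mul_assoc]; rfl⟩

include hbz

lemma Lzr (p q : Fin n → ℕ) (i : Fin n) :
    ∃ t : ℝ, Mm z zbar p q * z i
      = eps t • Mm z zbar (Function.update p i (p i + 1)) q := by
  obtain ⟨t1, ht1⟩ := comm_list' (z i) (List.ofFn fun j => zbar j ^ q j) (by
    intro x hx
    obtain ⟨j, rfl⟩ := List.mem_ofFn.mp hx
    refine ⟨-((q j : ℝ) * -θ i j), eps_inv (comm_pow (eps_inv (hbz j i)) _)⟩)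
  obtain ⟨t2, ht2⟩ := ins_right n z θ hzz p i
  refine ⟨t1 + t2, ?_⟩
  rw [Mm, mul_assoc, ht1, mul_smul_comm, ← mul_assoc, ht2, smul_mul_assoc,
    smul_smul, eps_mul]
  rfl

end

section
include hbb

lemma Lbr (p q : Fin n → ℕ) (i : Fin n) :
    ∃ t : ℝ, Mm z zbar p q * zbar i
      = eps t • Mm z zbar p (Function.update q i (q i + 1)) := by
  obtain ⟨t, ht⟩ := ins_right n zbar θ hbb q i
  exact ⟨t, by rw [Mm, mul_assoc, ht, mul_smul_comm]; rfl⟩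

include hbz

lemma Lb (p q : Fin n → ℕ) (i : Fin n) :
    ∃ t : ℝ, zbar i * Mm z zbar p q
      = eps t • Mm z zbar p (Function.update q i (q i + 1)) := by
  obtain ⟨t1, ht1⟩ := comm_list (zbar i) (List.ofFn fun j => z j ^ p j) (by
    intro x hx
    obtain ⟨j, rfl⟩ := List.mem_ofFn.mp hx
    exact ⟨(p j : ℝ) * θ j i, comm_pow (hbz i j) _⟩)
  obtain ⟨t2, ht2⟩ := ins_left n zbar θ hbb q i
  refine ⟨t1 + t2, ?_⟩
  rw [Mm, ← mul_assoc, ht1, smul_mul_assoc, mul_assoc, ht2, mul_smul_comm,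
    smul_smul, eps_mul]
  rfl

end

lemma Mm_zero : Mm z zbar (fun _ => 0) (fun _ => 0) = (1 : A) := by
  rw [Mm]
  simp

end stmt7
namespace stmt7

variable {A : Type*} [Ring A] [StarRing A] [Algebra ℂ A] [StarModule ℂ A] {n : ℕ}
  {θ : Fin n → Fin n → ℝ} {z zbar : Fin n → A}

lemma star_eps_smul (t : ℝ) (x : A) : star (eps t • x) = eps (-t) • star x := by
  rw [star_smul]
  congr 1
  rw [Complex.star_def, eps_conj]

variable (hθ : ∀ p q, θ p q = - θ q p)
  (hzz : ∀ p q, z p * z q = eps (θ p q) • (z q * z p))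
  (hbb : ∀ p q, zbar p * zbar q = eps (θ p q) • (zbar q * zbar p))
  (hbz : ∀ p q, zbar p * z q = eps (θ q p) • (z q * zbar p))
  (hstarz : ∀ p, star (z p) = zbar p)

include hzz hbb hbz

lemma Pmul : ∀ (k : ℕ) (r s : Fin n → ℕ), (∑ j, (r j + s j)) ≤ k →
    ∀ p q : Fin n → ℕ, ∃ t : ℝ,
      Mm z zbar p q * Mm z zbar r s = eps t • Mm z zbar (p + r) (q + s) := by
  intro k
  induction k with
  | zero =>
    intro r s hs p q
    have h0 : ∀ j, r j + s j = 0 :=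
      fun j => Finset.sum_eq_zero_iff.mp (Nat.le_zero.mp hs) j (Finset.mem_univ j)
    have hr : r = fun _ => 0 := funext fun j => by have := h0 j; omega
    have hs' : s = fun _ => 0 := funext fun j => by have := h0 j; omega
    subst hr hs'
    refine ⟨0, ?_⟩
    rw [Mm_zero, mul_one, eps_zero, one_smul]
    congr 1 <;> funext j <;> simp
  | succ k ih =>
    intro r s hs p q
    by_cases hk : (∑ j, (r j + s j)) ≤ k
    · exact ih r s hk p q
    · have hex : ∃ i, r i ≠ 0 ∨ s i ≠ 0 := by
        by_contra hno
        push_neg at hno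
        apply hk
        have h0 : ∀ j ∈ Finset.univ, r j + s j = 0 := fun j _ => by
          have := hno j; omega
        rw [Finset.sum_congr rfl h0]
        simp
      obtain ⟨i, hi⟩ := hex
      rcases hi with hri | hsi
      · have hsum : (∑ j, (Function.update r i (r i - 1) j + s j)) ≤ k := by
          have hlt : (∑ j, (Function.update r i (r i - 1) j + s j))
              < ∑ j, (r j + s j) := by
            refine Finset.sum_lt_sum (fun j _ => ?_) ⟨i, Finset.mem_univ i, ?_⟩
            · rcases eq_or_ne j i with rfl | hj
              · rw [Function.update_self]; omega
              · rw [Function.update_of_ne hj]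
            · rw [Function.update_self]; omega
          omega
        obtain ⟨a, ha⟩ := Lz θ z zbar hzz (Function.update r i (r i - 1)) s i
        rw [upd_peel hri] at ha
        have hMrs := eps_inv ha
        obtain ⟨b, hb⟩ := Lzr θ z zbar hzz hbz p q i
        obtain ⟨c, hc⟩ := ih (Function.update r i (r i - 1)) s hsum
          (Function.update p i (p i + 1)) q
        have hidx : Function.update p i (p i + 1) + Function.update r i (r i - 1)
            = p + r := by
          funext j
          simp only [Pi.add_apply]
          rcases eq_or_ne j i with rfl | hj
          · rw [Function.update_self, Function.update_self]; omega
          · rw [Function.update_of_ne hj, Function.update_of_ne hj]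
        refine ⟨-a + b + c, ?_⟩
        rw [hMrs, mul_smul_comm, ← mul_assoc, hb, smul_mul_assoc, hc, hidx,
          smul_smul, smul_smul, eps_mul, eps_mul, add_assoc]
      · have hsum : (∑ j, (r j + Function.update s i (s i - 1) j)) ≤ k := by
          have hlt : (∑ j, (r j + Function.update s i (s i - 1) j))
              < ∑ j, (r j + s j) := by
            refine Finset.sum_lt_sum (fun j _ => ?_) ⟨i, Finset.mem_univ i, ?_⟩
            · rcases eq_or_ne j i with rfl | hj
              · rw [Function.update_self]; omega
              · rw [Function.update_of_ne hj]
            · rw [Function.update_self]; omega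
          omega
        obtain ⟨a, ha⟩ := Lb θ z zbar hbb hbz r (Function.update s i (s i - 1)) i
        rw [upd_peel hsi] at ha
        have hMrs := eps_inv ha
        obtain ⟨b, hb⟩ := Lbr θ z zbar hbb p q i
        obtain ⟨c, hc⟩ := ih r (Function.update s i (s i - 1)) hsum
          p (Function.update q i (q i + 1))
        have hidx : Function.update q i (q i + 1) + Function.update s i (s i - 1)
            = q + s := by
          funext j
          simp only [Pi.add_apply]
          rcases eq_or_ne j i with rfl | hj
          · rw [Function.update_self, Function.update_self]; omega
          · rw [Function.update_of_ne hj, Function.update_of_ne hj]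
        refine ⟨-a + b + c, ?_⟩
        rw [hMrs, mul_smul_comm, ← mul_assoc, hb, smul_mul_assoc, hc, hidx,
          smul_smul, smul_smul, eps_mul, eps_mul, add_assoc]

include hstarz

lemma MStar : ∀ (k : ℕ) (p q : Fin n → ℕ), (∑ j, (p j + q j)) ≤ k →
    ∃ t : ℝ, star (Mm z zbar p q : A) = eps t • Mm z zbar q p := by
  have hstarb : ∀ j, star (zbar j) = z j := fun j => by rw [← hstarz j, star_star]
  intro k
  induction k with
  | zero =>
    intro p q hs
    have h0 : ∀ j, p j + q j = 0 :=
      fun j => Finset.sum_eq_zero_iff.mp (Nat.le_zero.mp hs) j (Finset.mem_univ j)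
    have hp : p = fun _ => 0 := funext fun j => by have := h0 j; omega
    have hq : q = fun _ => 0 := funext fun j => by have := h0 j; omega
    subst hp hq
    exact ⟨0, by rw [Mm_zero, star_one, eps_zero, one_smul]⟩
  | succ k ih =>
    intro p q hs
    by_cases hk : (∑ j, (p j + q j)) ≤ k
    · exact ih p q hk
    · have hex : ∃ i, p i ≠ 0 ∨ q i ≠ 0 := by
        by_contra hno
        push_neg at hno
        apply hk
        have h0 : ∀ j ∈ Finset.univ, p j + q j = 0 := fun j _ => by
          have := hno j; omega
        rw [Finset.sum_congr rfl h0]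
        simp
      obtain ⟨i, hi⟩ := hex
      rcases hi with hpi | hqi
      · have hsum : (∑ j, (Function.update p i (p i - 1) j + q j)) ≤ k := by
          have hlt : (∑ j, (Function.update p i (p i - 1) j + q j))
              < ∑ j, (p j + q j) := by
            refine Finset.sum_lt_sum (fun j _ => ?_) ⟨i, Finset.mem_univ i, ?_⟩
            · rcases eq_or_ne j i with rfl | hj
              · rw [Function.update_self]; omega
              · rw [Function.update_of_ne hj]
            · rw [Function.update_self]; omega
          omega
        obtain ⟨a, ha⟩ := Lz θ z zbar hzz (Function.update p i (p i - 1)) q i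
        rw [upd_peel hpi] at ha
        have hM := eps_inv ha
        obtain ⟨b, hb⟩ := ih (Function.update p i (p i - 1)) q hsum
        obtain ⟨c, hc⟩ := Lbr θ z zbar hbb q (Function.update p i (p i - 1)) i
        rw [upd_peel hpi] at hc
        refine ⟨a + b + c, ?_⟩
        rw [hM, star_eps_smul, neg_neg, star_mul, hstarz, hb, smul_mul_assoc,
          hc, smul_smul, smul_smul, eps_mul, eps_mul]
      · have hsum : (∑ j, (p j + Function.update q i (q i - 1) j)) ≤ k := by
          have hlt : (∑ j, (p j + Function.update q i (q i - 1) j))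
              < ∑ j, (p j + q j) := by
            refine Finset.sum_lt_sum (fun j _ => ?_) ⟨i, Finset.mem_univ i, ?_⟩
            · rcases eq_or_ne j i with rfl | hj
              · rw [Function.update_self]; omega
              · rw [Function.update_of_ne hj]
            · rw [Function.update_self]; omega
          omega
        obtain ⟨a, ha⟩ := Lbr θ z zbar hbb p (Function.update q i (q i - 1)) i
        rw [upd_peel hqi] at ha
        have hM := eps_inv ha
        obtain ⟨b, hb⟩ := ih p (Function.update q i (q i - 1)) hsum
        obtain ⟨c, hc⟩ := Lz θ z zbar hzz (Function.update q i (q i - 1)) p i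
        rw [upd_peel hqi] at hc
        refine ⟨a + b + c, ?_⟩
        rw [hM, star_eps_smul, neg_neg, star_mul, hstarb, hb, mul_smul_comm,
          hc, smul_smul, smul_smul, eps_mul, eps_mul]

include hθ

lemma Sw : ∀ (k : ℕ) (w : Fin n → ℕ), (∑ j, w j) ≤ k →
    ∃ c : ℂ, c ≠ 0 ∧ ∀ p q : Fin n → ℕ, p + q = w →
      Mm z zbar p q * star (Mm z zbar p q : A) = c • Mm z zbar w w := by
  have hstarb : ∀ j, star (zbar j) = z j := fun j => by rw [← hstarz j, star_star]
  intro k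
  induction k with
  | zero =>
    intro w hw
    have h0 : ∀ j, w j = 0 :=
      fun j => Finset.sum_eq_zero_iff.mp (Nat.le_zero.mp hw) j (Finset.mem_univ j)
    have hwf : w = fun _ => 0 := funext fun j => h0 j
    subst hwf
    refine ⟨1, one_ne_zero, fun p q hpq => ?_⟩
    have hp : p = fun _ => 0 := funext fun j => by
      have := congrFun hpq j; simp only [Pi.add_apply] at this; omega
    have hq : q = fun _ => 0 := funext fun j => by
      have := congrFun hpq j; simp only [Pi.add_apply] at this; omega
    subst hp hq
    rw [Mm_zero, star_one, mul_one, one_smul]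
  | succ k ih =>
    intro w hw
    by_cases hk : (∑ j, w j) ≤ k
    · exact ih w hk
    · have hex : ∃ i, w i ≠ 0 := by
        by_contra hno
        push_neg at hno
        apply hk
        have h0 : ∀ j ∈ Finset.univ, w j = 0 := fun j _ => hno j
        rw [Finset.sum_congr rfl h0]
        simp
      obtain ⟨i, hwi⟩ := hex
      have hsum : (∑ j, Function.update w i (w i - 1) j) ≤ k := by
        have hlt : (∑ j, Function.update w i (w i - 1) j) < ∑ j, w j := by
          refine Finset.sum_lt_sum (fun j _ => ?_) ⟨i, Finset.mem_univ i, ?_⟩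
          · rcases eq_or_ne j i with rfl | hj
            · rw [Function.update_self]; omega
            · rw [Function.update_of_ne hj]
          · rw [Function.update_self]; omega
        omega
      obtain ⟨c', hc0, hc'⟩ := ih (Function.update w i (w i - 1)) hsum
      obtain ⟨t1, ht1⟩ := Lz θ z zbar hzz (Function.update w i (w i - 1))
        (Function.update w i (w i - 1)) i
      rw [upd_peel hwi] at ht1
      obtain ⟨t2, ht2⟩ := Lbr θ z zbar hbb w (Function.update w i (w i - 1)) i
      rw [upd_peel hwi] at ht2
      have key : ∀ m : A, m * star m
          = c' • Mm z zbar (Function.update w i (w i - 1)) (Function.update w i (w i - 1)) →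
          (z i * m) * (star m * zbar i) = (eps (t1 + t2) * c') • Mm z zbar w w := by
        intro m hm
        have hsc : c' * eps t1 * eps t2 = eps (t1 + t2) * c' := by
          rw [mul_assoc, eps_mul, mul_comm]
        calc (z i * m) * (star m * zbar i)
            = (z i * (m * star m)) * zbar i := by simp only [mul_assoc]
          _ = (z i * (c' • Mm z zbar (Function.update w i (w i - 1))
                (Function.update w i (w i - 1)))) * zbar i := by rw [hm]
          _ = c' • ((z i * Mm z zbar (Function.update w i (w i - 1))
                (Function.update w i (w i - 1))) * zbar i) := by
              rw [mul_smul_comm, smul_mul_assoc]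
          _ = c' • ((eps t1 • Mm z zbar w (Function.update w i (w i - 1))) * zbar i) := by
              rw [ht1]
          _ = (c' * eps t1) • (Mm z zbar w (Function.update w i (w i - 1)) * zbar i) := by
              rw [smul_mul_assoc, smul_smul]
          _ = (c' * eps t1) • (eps t2 • Mm z zbar w w) := by rw [ht2]
          _ = (eps (t1 + t2) * c') • Mm z zbar w w := by rw [smul_smul, hsc]
      refine ⟨eps (t1 + t2) * c', mul_ne_zero (eps_ne_zero _) hc0, ?_⟩
      intro p q hpq
      have hwiv : p i + q i = w i := by
        have := congrFun hpq i; simp only [Pi.add_apply] at this; exact this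
      by_cases hpi : p i ≠ 0
      · have hidx : Function.update p i (p i - 1) + q = Function.update w i (w i - 1) := by
          funext j
          simp only [Pi.add_apply]
          rcases eq_or_ne j i with rfl | hj
          · rw [Function.update_self, Function.update_self]; omega
          · rw [Function.update_of_ne hj, Function.update_of_ne hj]
            have := congrFun hpq j; simp only [Pi.add_apply] at this; exact this
        obtain ⟨a, ha⟩ := Lz θ z zbar hzz (Function.update p i (p i - 1)) q i
        rw [upd_peel hpi] at ha
        have hM := eps_inv ha
        have hstar : star (Mm z zbar p q : A)
            = eps a • (star (Mm z zbar (Function.update p i (p i - 1)) q) * zbar i) := by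
          rw [hM, star_eps_smul, neg_neg, star_mul, hstarz]
        rw [hstar, hM, smul_mul_smul, eps_mul, neg_add_cancel, eps_zero, one_smul]
        exact key _ (hc' _ _ hidx)
      · push_neg at hpi
        have hqi : q i ≠ 0 := by omega
        have hidx : p + Function.update q i (q i - 1) = Function.update w i (w i - 1) := by
          funext j
          simp only [Pi.add_apply]
          rcases eq_or_ne j i with rfl | hj
          · rw [Function.update_self, Function.update_self]; omega
          · rw [Function.update_of_ne hj, Function.update_of_ne hj]
            have := congrFun hpq j; simp only [Pi.add_apply] at this; exact this
        obtain ⟨a, ha⟩ := Lbr θ z zbar hbb p (Function.update q i (q i - 1)) i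
        rw [upd_peel hqi] at ha
        have hM := eps_inv ha
        have hstar : star (Mm z zbar p q : A)
            = eps a • (z i * star (Mm z zbar p (Function.update q i (q i - 1)))) := by
          rw [hM, star_eps_smul, neg_neg, star_mul, hstarb]
        obtain ⟨b, hbq⟩ := Lzr θ z zbar hzz hbz p (Function.update q i (q i - 1)) i
        obtain ⟨b', hb'⟩ := Lz θ z zbar hzz p (Function.update q i (q i - 1)) i
        have hmz : Mm z zbar p (Function.update q i (q i - 1)) * z i
            = eps (b + -b') • (z i * Mm z zbar p (Function.update q i (q i - 1))) := by
          rw [hbq, eps_inv hb', smul_smul, eps_mul]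
        have hcom : zbar i * z i = z i * zbar i := by
          have h1 := hbz i i
          have h2 : θ i i = 0 := by have := hθ i i; linarith
          rw [h2, eps_zero, one_smul] at h1
          exact h1
        have hbarm : zbar i * star (Mm z zbar p (Function.update q i (q i - 1)))
            = eps (-(b + -b')) • (star (Mm z zbar p (Function.update q i (q i - 1))) * zbar i) := by
          have h3 : zbar i * star (Mm z zbar p (Function.update q i (q i - 1)))
              = star (Mm z zbar p (Function.update q i (q i - 1)) * z i) := by
            rw [star_mul, hstarz]
          rw [h3, hmz, star_eps_smul, star_mul, hstarz]
        have hmid : (Mm z zbar p (Function.update q i (q i - 1)) * zbar i)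
              * (z i * star (Mm z zbar p (Function.update q i (q i - 1))))
            = (Mm z zbar p (Function.update q i (q i - 1)) * z i)
              * (zbar i * star (Mm z zbar p (Function.update q i (q i - 1)))) := by
          calc (Mm z zbar p (Function.update q i (q i - 1)) * zbar i)
                * (z i * star (Mm z zbar p (Function.update q i (q i - 1))))
              = Mm z zbar p (Function.update q i (q i - 1)) * ((zbar i * z i)
                * star (Mm z zbar p (Function.update q i (q i - 1)))) := by
                simp only [mul_assoc]
            _ = Mm z zbar p (Function.update q i (q i - 1)) * ((z i * zbar i)
                * star (Mm z zbar p (Function.update q i (q i - 1)))) := by rw [hcom]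
            _ = (Mm z zbar p (Function.update q i (q i - 1)) * z i)
                * (zbar i * star (Mm z zbar p (Function.update q i (q i - 1)))) := by
                simp only [mul_assoc]
        rw [hstar, hM, smul_mul_smul, eps_mul, neg_add_cancel, eps_zero, one_smul,
          hmid, hmz, hbarm, smul_mul_smul, eps_mul, add_neg_cancel, eps_zero, one_smul]
        exact key _ (hc' _ _ hidx)

end stmt7
namespace stmt7

variable {n : ℕ}

def llt (a b : Fin n → ℕ) : Prop := ∃ i, (∀ j, j < i → a j = b j) ∧ a i < b i

lemma llt_irrefl (a : Fin n → ℕ) : ¬ llt a a := fun ⟨_, _, h⟩ => lt_irrefl _ h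

lemma llt_trans {a b c : Fin n → ℕ} (h1 : llt a b) (h2 : llt b c) : llt a c := by
  obtain ⟨i, hi, hlt⟩ := h1
  obtain ⟨i', hi', hlt'⟩ := h2
  rcases lt_trichotomy i i' with h | rfl | h
  · exact ⟨i, fun j hj => (hi j hj).trans (hi' j (hj.trans h)), by rw [← hi' i h]; exact hlt⟩
  · exact ⟨i, fun j hj => (hi j hj).trans (hi' j hj), hlt.trans hlt'⟩
  · exact ⟨i', fun j hj => (hi j (hj.trans h)).trans (hi' j hj), by rw [hi i' h]; exact hlt'⟩

lemma min_filter (pred : Fin n → Prop) [DecidablePred pred] (hne : ∃ i, pred i) :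
    ∃ i0, pred i0 ∧ ∀ j, j < i0 → ¬ pred j := by
  classical
  obtain ⟨i, hi⟩ := hne
  have hS : (Finset.univ.filter fun i => pred i).Nonempty :=
    ⟨i, Finset.mem_filter.mpr ⟨Finset.mem_univ i, hi⟩⟩
  refine ⟨(Finset.univ.filter fun i => pred i).min' hS, ?_, ?_⟩
  · have := (Finset.univ.filter fun i => pred i).min'_mem hS
    exact (Finset.mem_filter.mp this).2
  · intro j hj hpj
    have hle := (Finset.univ.filter fun i => pred i).min'_le j
      (Finset.mem_filter.mpr ⟨Finset.mem_univ j, hpj⟩)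
    exact absurd hle (not_le.mpr hj)

lemma llt_trichotomy (a b : Fin n → ℕ) : a = b ∨ llt a b ∨ llt b a := by
  by_cases hab : a = b
  · exact Or.inl hab
  · have hex : ∃ i, a i ≠ b i := by
      by_contra hno
      push_neg at hno
      exact hab (funext hno)
    obtain ⟨i0, hi0, hpre⟩ := min_filter _ hex
    have hpre' : ∀ j, j < i0 → a j = b j := fun j hj => not_ne_iff.mp (hpre j hj)
    rcases lt_or_gt_of_ne hi0 with h | h
    · exact Or.inr (Or.inl ⟨i0, hpre', h⟩)
    · exact Or.inr (Or.inr ⟨i0, fun j hj => (hpre' j hj).symm, h⟩)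

lemma llt_add_right {a b : Fin n → ℕ} (c : Fin n → ℕ) (h : llt a b) : llt (a + c) (b + c) := by
  obtain ⟨i, hi, hlt⟩ := h
  exact ⟨i, fun j hj => by simp only [Pi.add_apply]; rw [hi j hj], by
    simp only [Pi.add_apply]; omega⟩

lemma llt_add_left {a b : Fin n → ℕ} (c : Fin n → ℕ) (h : llt a b) : llt (c + a) (c + b) := by
  obtain ⟨i, hi, hlt⟩ := h
  exact ⟨i, fun j hj => by simp only [Pi.add_apply]; rw [hi j hj], by
    simp only [Pi.add_apply]; omega⟩

lemma llt_zero {w x : Fin n → ℕ} (hw : ∀ i, w i = 0) (hx : ∃ i, x i ≠ 0) : llt w x := by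
  obtain ⟨i0, hi0, hpre⟩ := min_filter (fun i => x i ≠ 0) hx
  refine ⟨i0, fun j hj => ?_, by have := hw i0; omega⟩
  have hxj : x j = 0 := not_ne_iff.mp (hpre j hj)
  rw [hw j, hxj]

lemma llt_self_add {w : Fin n → ℕ} (hw : ∃ i, w i ≠ 0) : llt w (w + w) := by
  obtain ⟨i0, hi0, hpre⟩ := min_filter (fun i => w i ≠ 0) hw
  refine ⟨i0, fun j hj => ?_, by simp only [Pi.add_apply]; omega⟩
  have hwj : w j = 0 := not_ne_iff.mp (hpre j hj)
  simp only [Pi.add_apply, hwj]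

lemma maxElem (s : Finset (Fin n → ℕ)) (hs : s.Nonempty) :
    ∃ m ∈ s, ∀ x ∈ s, ¬ llt m x := by
  classical
  induction s using Finset.induction_on with
  | empty => exact absurd hs (by simp)
  | @insert a t ha ih =>
    rcases t.eq_empty_or_nonempty with rfl | hne
    · refine ⟨a, Finset.mem_insert_self a _, fun x hx => ?_⟩
      rcases Finset.mem_insert.mp hx with rfl | hxt
      · exact llt_irrefl x
      · exact absurd hxt (Finset.notMem_empty x)
    · obtain ⟨m, hm, hmax⟩ := ih hne
      by_cases hma : llt m a
      · refine ⟨a, Finset.mem_insert_self a t, fun x hx => ?_⟩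
        rcases Finset.mem_insert.mp hx with rfl | hxt
        · exact llt_irrefl x
        · exact fun hax => hmax x hxt (llt_trans hma hax)
      · refine ⟨m, Finset.mem_insert_of_mem hm, fun x hx => ?_⟩
        rcases Finset.mem_insert.mp hx with rfl | hxt
        · exact hma
        · exact hmax x hxt

lemma max_of_sum_eq {u v m : Fin n → ℕ} (h : u + v = m + m)
    (hu : ¬ llt m u) (hv : ¬ llt m v) : u = m ∧ v = m := by
  have hum : u = m := by
    rcases llt_trichotomy u m with h' | h' | h'
    · exact h'
    · exfalso
      rcases llt_trichotomy v m with h'' | h'' | h''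
      · rw [h''] at h
        have heq : u = m := add_right_cancel h
        rw [heq] at h'
        exact llt_irrefl _ h'
      · have hc := llt_trans (llt_add_right v h') (llt_add_left m h'')
        rw [h] at hc
        exact llt_irrefl _ hc
      · exact hv h''
    · exact absurd h' hu
  refine ⟨hum, ?_⟩
  rw [hum] at h
  exact add_left_cancel h

end stmt7

/-- Every projector (self-adjoint idempotent matrix) over the θ-deformed
2n-plane algebra `C_alg(ℝ^{2n}_Θ)` (characterized by its generators, relations, and its
basis of ordered monomials) has all its entries in `ℂ·1`. -/
theorem stmt_7 {A : Type*} [Ring A] [StarRing A] [Algebra ℂ A] [StarModule ℂ A] {n : ℕ}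
    (θ : Fin n → Fin n → ℝ) (hθ : ∀ p q, θ p q = - θ q p)
    (z zbar : Fin n → A)
    (hzz : ∀ p q, z p * z q = Complex.exp (θ p q * Complex.I) • (z q * z p))
    (hbb : ∀ p q, zbar p * zbar q = Complex.exp (θ p q * Complex.I) • (zbar q * zbar p))
    (hbz : ∀ p q, zbar p * z q = Complex.exp (θ q p * Complex.I) • (z q * zbar p))
    (hstarz : ∀ p, star (z p) = zbar p)
    (B : Module.Basis ((Fin n → ℕ) × (Fin n → ℕ)) ℂ A)
    (hB : ∀ p q : Fin n → ℕ, B (p, q) =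
      (List.ofFn fun i => z i ^ p i).prod * (List.ofFn fun i => zbar i ^ q i).prod) :
    ∀ (N : ℕ) (P : Matrix (Fin N) (Fin N) A),
      P * P = P → P.conjTranspose = P →
      ∀ k l, ∃ c : ℂ, P k l = algebraMap ℂ A c := by
  classical
  intro N P hP2 hPs k l
  have hzz' : ∀ p q, z p * z q = stmt7.eps (θ p q) • (z q * z p) := hzz
  have hbb' : ∀ p q, zbar p * zbar q = stmt7.eps (θ p q) • (zbar q * zbar p) := hbb
  have hbz' : ∀ p q, zbar p * z q = stmt7.eps (θ q p) • (z q * zbar p) := hbz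
  have hMB : ∀ u : (Fin n → ℕ) × (Fin n → ℕ), (B u : A) = stmt7.Mm z zbar u.1 u.2 :=
    fun u => hB u.1 u.2
  have hexp : ∀ x : A, x = ∑ u ∈ (B.repr x).support, B.repr x u • B u := by
    intro x
    conv_lhs => rw [← B.linearCombination_repr x]
    rw [Finsupp.linearCombination_apply, Finsupp.sum]
  have main : ∀ (a b : Fin N) (u), u ∈ (B.repr (P a b)).support →
      u = ((fun _ => 0 : Fin n → ℕ), (fun _ => 0 : Fin n → ℕ)) := by
    by_contra hcon
    push_neg at hcon
    obtain ⟨a0, b0, u', hu'supp, hu'ne⟩ := hcon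
    set T := Finset.univ.biUnion (fun ab : Fin N × Fin N =>
      ((B.repr (P ab.1 ab.2)).support.image fun u => u.1 + u.2)) with hT
    have wmem : ∀ (a b : Fin N) (u : (Fin n → ℕ) × (Fin n → ℕ)),
        u ∈ (B.repr (P a b)).support → u.1 + u.2 ∈ T := by
      intro a b u hu
      rw [hT]
      exact Finset.mem_biUnion.mpr ⟨(a, b), Finset.mem_univ _,
        Finset.mem_image_of_mem _ hu⟩
    obtain ⟨w0, hw0T, hw0max⟩ := stmt7.maxElem T ⟨u'.1 + u'.2, wmem _ _ _ hu'supp⟩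
    have hxne : ∃ i, (u'.1 + u'.2) i ≠ 0 := by
      by_contra hno
      push_neg at hno
      apply hu'ne
      have h1 : u'.1 = fun _ => 0 := funext fun j => by
        have := hno j; simp only [Pi.add_apply] at this; omega
      have h2 : u'.2 = fun _ => 0 := funext fun j => by
        have := hno j; simp only [Pi.add_apply] at this; omega
      exact Prod.ext h1 h2
    have hw0ne : ∃ i, w0 i ≠ 0 := by
      by_contra hno
      push_neg at hno
      exact hw0max _ (wmem _ _ _ hu'supp) (stmt7.llt_zero hno hxne)
    rw [hT] at hw0T
    obtain ⟨ab1, _, himg⟩ := Finset.mem_biUnion.mp hw0T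
    obtain ⟨u1, hu1supp, hu1w⟩ := Finset.mem_image.mp himg
    obtain ⟨cw, hcw0, hcw⟩ := stmt7.Sw hθ hzz' hbb' hbz' hstarz (∑ j, w0 j) w0 le_rfl
    have core : ∀ x : A, (∀ u, u ∈ (B.repr x).support → ¬ stmt7.llt w0 (u.1 + u.2)) →
        B.repr (x * star x) (w0, w0)
          = cw * ∑ u ∈ (B.repr x).support,
              (if u.1 + u.2 = w0 then ((Complex.normSq (B.repr x u) : ℝ) : ℂ) else 0) := by
      intro x hx
      have hstarx : star x = ∑ u ∈ (B.repr x).support,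
          (starRingEnd ℂ) (B.repr x u) • star (B u) := by
        conv_lhs => rw [hexp x]
        rw [star_sum]
        exact Finset.sum_congr rfl fun u _ => by rw [star_smul, Complex.star_def]
      have hprod : x * star x = ∑ u ∈ (B.repr x).support, ∑ v ∈ (B.repr x).support,
          (B.repr x u * (starRingEnd ℂ) (B.repr x v)) • (B u * star (B v)) := by
        conv_lhs => rw [hstarx]
        conv_lhs =>
          lhs
          rw [hexp x]
        rw [Finset.sum_mul_sum]
        exact Finset.sum_congr rfl fun u _ => Finset.sum_congr rfl fun v _ => by
          rw [smul_mul_smul]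
      have heval : B.repr (x * star x) (w0, w0)
          = ∑ u ∈ (B.repr x).support, ∑ v ∈ (B.repr x).support,
              (B.repr x u * (starRingEnd ℂ) (B.repr x v))
                * (B.repr (B u * star (B v)) (w0, w0)) := by
        rw [hprod, map_sum, Finsupp.finset_sum_apply]
        refine Finset.sum_congr rfl fun u _ => ?_
        rw [map_sum, Finsupp.finset_sum_apply]
        refine Finset.sum_congr rfl fun v _ => ?_
        rw [map_smul, Finsupp.smul_apply, smul_eq_mul]
      have hgoff : ∀ u ∈ (B.repr x).support, ∀ v ∈ (B.repr x).support,
          ¬(u = v ∧ u.1 + u.2 = w0) → B.repr (B u * star (B v)) (w0, w0) = 0 := by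
        intro u hu v hv hnc
        obtain ⟨t, hst⟩ := stmt7.MStar hzz' hbb' hbz' hstarz
          (∑ j, (v.1 j + v.2 j)) v.1 v.2 le_rfl
        obtain ⟨t', hm⟩ := stmt7.Pmul hzz' hbb' hbz'
          (∑ j, (v.2 j + v.1 j)) v.2 v.1 le_rfl u.1 u.2
        have hBform : B u * star (B v)
            = stmt7.eps (t + t') • B (u.1 + v.2, u.2 + v.1) := by
          rw [hMB u, hMB v, hst, mul_smul_comm, hm, smul_smul, stmt7.eps_mul,
            hMB (u.1 + v.2, u.2 + v.1)]
        rw [hBform, map_smul, Finsupp.smul_apply, B.repr_self, smul_eq_mul]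
        have hnepair : (u.1 + v.2, u.2 + v.1) ≠ (w0, w0) := by
          intro hcontra
          have h1 : u.1 + v.2 = w0 := congrArg Prod.fst hcontra
          have h2 : u.2 + v.1 = w0 := congrArg Prod.snd hcontra
          have hsum2 : (u.1 + u.2) + (v.1 + v.2) = w0 + w0 := by
            funext j
            have e1 := congrFun h1 j
            have e2 := congrFun h2 j
            simp only [Pi.add_apply] at *
            omega
          obtain ⟨hwu, hwv⟩ := stmt7.max_of_sum_eq hsum2 (hx u hu) (hx v hv)
          apply hnc
          refine ⟨?_, hwu⟩
          have hv2 : v.2 = u.2 := by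
            have he : u.1 + v.2 = u.1 + u.2 := by rw [h1, hwu]
            exact add_left_cancel he
          have hv1 : v.1 = u.1 := by
            have he : u.2 + v.1 = u.2 + u.1 := by rw [h2, ← hwu, add_comm]
            exact add_left_cancel he
          exact (Prod.ext hv1 hv2).symm
        rw [Finsupp.single_apply, if_neg hnepair, mul_zero]
      have hgdiag : ∀ u ∈ (B.repr x).support, u.1 + u.2 = w0 →
          B.repr (B u * star (B u)) (w0, w0) = cw := by
        intro u hu huw
        rw [hMB u, hcw u.1 u.2 huw, ← hMB (w0, w0), map_smul, Finsupp.smul_apply,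
          B.repr_self, Finsupp.single_apply, if_pos rfl, smul_eq_mul, mul_one]
      rw [heval]
      have hrow : ∀ u ∈ (B.repr x).support,
          (∑ v ∈ (B.repr x).support, (B.repr x u * (starRingEnd ℂ) (B.repr x v))
            * (B.repr (B u * star (B v)) (w0, w0)))
          = if u.1 + u.2 = w0 then ((Complex.normSq (B.repr x u) : ℝ) : ℂ) * cw else 0 := by
        intro u hu
        rw [Finset.sum_eq_single_of_mem u hu (fun v hv hvu => by
          rw [hgoff u hu v hv (fun hc => hvu (hc.1.symm)), mul_zero])]
        by_cases hcond : u.1 + u.2 = w0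
        · rw [if_pos hcond, hgdiag u hu hcond, Complex.mul_conj]
        · rw [if_neg hcond, hgoff u hu u hu (fun hc => hcond hc.2), mul_zero]
      rw [Finset.sum_congr rfl hrow, Finset.mul_sum]
      exact Finset.sum_congr rfl fun u _ => by split <;> ring
    have hEq : ∑ j, P ab1.1 j * star (P ab1.1 j) = P ab1.1 ab1.1 := by
      have h1 := congrFun (congrFun hP2 ab1.1) ab1.1
      rw [Matrix.mul_apply] at h1
      rw [← h1]
      refine Finset.sum_congr rfl fun j _ => ?_
      congr 1
      have h2 := congrFun (congrFun hPs j) ab1.1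
      rw [Matrix.conjTranspose_apply] at h2
      exact h2
    have hR : B.repr (P ab1.1 ab1.1) (w0, w0) = 0 := by
      by_contra hne0
      exact hw0max _ (wmem _ _ _ (Finsupp.mem_support_iff.mpr hne0))
        (stmt7.llt_self_add hw0ne)
    have hsum0 : (cw * ∑ j, ∑ u ∈ (B.repr (P ab1.1 j)).support,
        (if u.1 + u.2 = w0 then ((Complex.normSq (B.repr (P ab1.1 j) u) : ℝ) : ℂ) else 0))
        = 0 := by
      rw [Finset.mul_sum]
      calc ∑ j, cw * ∑ u ∈ (B.repr (P ab1.1 j)).support,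
            (if u.1 + u.2 = w0 then ((Complex.normSq (B.repr (P ab1.1 j) u) : ℝ) : ℂ) else 0)
          = ∑ j, B.repr (P ab1.1 j * star (P ab1.1 j)) (w0, w0) :=
            Finset.sum_congr rfl fun j _ =>
              (core _ (fun u hu => hw0max _ (wmem _ _ _ hu))).symm
        _ = B.repr (∑ j, P ab1.1 j * star (P ab1.1 j)) (w0, w0) := by
            rw [map_sum, Finsupp.finset_sum_apply]
        _ = 0 := by rw [hEq, hR]
    have hsumC : (∑ j, ∑ u ∈ (B.repr (P ab1.1 j)).support,
        (if u.1 + u.2 = w0 then ((Complex.normSq (B.repr (P ab1.1 j) u) : ℝ) : ℂ) else 0))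
        = 0 := (mul_eq_zero.mp hsum0).resolve_left hcw0
    have hreal : (∑ j, ∑ u ∈ (B.repr (P ab1.1 j)).support,
        (if u.1 + u.2 = w0 then Complex.normSq (B.repr (P ab1.1 j) u) else 0) : ℝ) = 0 := by
      have hcast : ((∑ j, ∑ u ∈ (B.repr (P ab1.1 j)).support,
          (if u.1 + u.2 = w0 then Complex.normSq (B.repr (P ab1.1 j) u) else 0) : ℝ) : ℂ)
          = ∑ j, ∑ u ∈ (B.repr (P ab1.1 j)).support,
            (if u.1 + u.2 = w0 then ((Complex.normSq (B.repr (P ab1.1 j) u) : ℝ) : ℂ) else 0) := by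
        push_cast [apply_ite (fun r : ℝ => (r : ℂ))]
        norm_num
      exact_mod_cast hcast.trans hsumC
    have hnn : ∀ (j : Fin N) (u : (Fin n → ℕ) × (Fin n → ℕ)),
        (0:ℝ) ≤ if u.1 + u.2 = w0 then Complex.normSq (B.repr (P ab1.1 j) u) else 0 := by
      intro j u
      split
      · exact Complex.normSq_nonneg _
      · exact le_rfl
    have hterm := (Finset.sum_eq_zero_iff_of_nonneg (fun j _ =>
      Finset.sum_nonneg fun u _ => hnn j u)).mp hreal ab1.2 (Finset.mem_univ _)
    have hterm2 := (Finset.sum_eq_zero_iff_of_nonneg (fun u _ => hnn ab1.2 u)).mp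
      hterm u1 hu1supp
    rw [if_pos hu1w] at hterm2
    exact Finsupp.mem_support_iff.mp hu1supp (Complex.normSq_eq_zero.mp hterm2)
  refine ⟨B.repr (P k l) ((fun _ => 0 : Fin n → ℕ), (fun _ => 0 : Fin n → ℕ)), ?_⟩
  have hsub : (B.repr (P k l)).support
      ⊆ {((fun _ => 0 : Fin n → ℕ), (fun _ => 0 : Fin n → ℕ))} :=
    fun u hu => Finset.mem_singleton.mpr (main k l u hu)
  have hsingle := Finsupp.support_subset_singleton.mp hsub
  have hone : (B ((fun _ => 0 : Fin n → ℕ), (fun _ => 0 : Fin n → ℕ)) : A) = 1 := by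
    rw [hMB]
    exact stmt7.Mm_zero z zbar
  calc P k l = Finsupp.linearCombination ℂ (⇑B) (B.repr (P k l)) :=
        (B.linearCombination_repr _).symm
    _ = Finsupp.linearCombination ℂ (⇑B) (Finsupp.single
          ((fun _ => 0 : Fin n → ℕ), (fun _ => 0 : Fin n → ℕ))
          (B.repr (P k l) ((fun _ => 0 : Fin n → ℕ), (fun _ => 0 : Fin n → ℕ)))) := by
        rw [← hsingle]
    _ = B.repr (P k l) ((fun _ => 0 : Fin n → ℕ), (fun _ => 0 : Fin n → ℕ))
          • B ((fun _ => 0 : Fin n → ℕ), (fun _ => 0 : Fin n → ℕ)) :=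
        Finsupp.linearCombination_single _ _ _
    _ = algebraMap ℂ A _ := by rw [hone, Algebra.algebraMap_eq_smul_one]
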